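/- For a partition μ with cell-content generating polynomial B_μ = Σ_{□∈μ} q^{c(□)} t^{r(□)}, the character of the cotangent space of Hilb^n(ℂ²) at the monomial ideal I_μ, given by Σ_{□∈μ} (q^{a(□)+1} t^{-l(□)} + q^{-a(□)} t^{l(□)+1}), equals qt·B_μ + B_μ* − (q−1)(t−1)·B_μ·B_μ*, where B_μ* = B_μ(q^{-1}, t^{-1}). -/

import Mathlib

open Finset

variable {K : Type*} [Field K]

lemma geomA (q : K) (hq : q ≠ 0) (m : ℕ) :
    (q - 1) * ∑ c ∈ range m, q ^ (-(c : ℤ)) = q - q ^ (1 - (m : ℤ)) := by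
  induction m with
  | zero => simp
  | succ n ih =>
    rw [sum_range_succ, mul_add, ih]
    have e1 : (1 : ℤ) - ((n : ℤ) + 1) = -(n : ℤ) := by ring
    have e2 : q ^ ((1 : ℤ) - (n : ℤ)) = q * q ^ (-(n : ℤ)) := by
      rw [sub_eq_add_neg, zpow_add₀ hq, zpow_one]
    push_cast
    rw [e1]
    linear_combination -e2

lemma geomB (q : K) (hq : q ≠ 0) (m : ℕ) :
    (q - 1) * ∑ c ∈ range m, q ^ ((c : ℤ)) = q ^ (m : ℤ) - 1 := by
  induction m with
  | zero => simp
  | succ n ih =>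
    rw [sum_range_succ, mul_add, ih]
    push_cast
    rw [zpow_add_one₀ hq]
    ring

lemma geomC (q : K) (hq : q ≠ 0) (m : ℕ) :
    ∑ c ∈ range m, q ^ (-(c : ℤ)) = q ^ (1 - (m : ℤ)) * ∑ c ∈ range m, q ^ ((c : ℤ)) := by
  rw [← Finset.sum_range_reflect (fun c => q ^ (-(c : ℤ))) m, mul_sum]
  refine sum_congr rfl fun j hj => ?_
  have hj' := mem_range.mp hj
  have e1 : -((m - 1 - j : ℕ) : ℤ) = (1 - (m : ℤ)) + (j : ℤ) := by omega
  rw [e1, zpow_add₀ hq]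

lemma geomD (t : K) (ht : t ≠ 0) (N : ℕ) :
    (t - 1) * ∑ r ∈ range N, t ^ ((N : ℤ) - r) = t ^ ((N : ℤ) + 1) - t := by
  have hB := geomB t ht N
  have e : ∀ j ∈ range N, t ^ ((N : ℤ) - ((N - 1 - j : ℕ) : ℤ)) = t * t ^ ((j : ℤ)) := by
    intro j hj
    have hj' := mem_range.mp hj
    have e1 : (N : ℤ) - ((N - 1 - j : ℕ) : ℤ) = 1 + (j : ℤ) := by omega
    rw [e1, zpow_add₀ ht, zpow_one]
  rw [← Finset.sum_range_reflect (fun r => t ^ ((N : ℤ) - r)) N, sum_congr rfl e, ← mul_sum,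
    zpow_add_one₀ ht]
  linear_combination t * hB

lemma geomE (t : K) (ht : t ≠ 0) (N : ℕ) :
    (t - 1) * ∑ r ∈ range N, t ^ ((r : ℤ) - N) = 1 - t ^ (-(N : ℤ)) := by
  have hB := geomB t ht N
  have h2 : t ^ (-(N : ℤ)) * t ^ ((N : ℤ)) = 1 := by rw [← zpow_add₀ ht]; simp
  have e : ∀ r ∈ range N, t ^ ((r : ℤ) - N) = t ^ (-(N : ℤ)) * t ^ ((r : ℤ)) := by
    intro r _
    rw [← zpow_add₀ ht]; ring_nf
  rw [sum_congr rfl e, ← mul_sum]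
  linear_combination t ^ (-(N : ℤ)) * hB + h2

lemma rowid (q t : K) (hq : q ≠ 0) (ht : t ≠ 0) (a b : ℤ) (M m : ℕ) :
    ((t ^ a - t ^ (a + 1)) * (q ^ (M : ℤ) * ∑ c ∈ range m, q ^ (-(c : ℤ)))
        + (t ^ (b + 1) - t ^ b) * (q ^ (1 - (M : ℤ)) * ∑ c ∈ range m, q ^ ((c : ℤ))))
      + (q - 1) * (t - 1) * ((∑ c ∈ range M, q ^ ((c : ℤ))) * t ^ a * (∑ c ∈ range m, q ^ (-(c : ℤ)))
          + t ^ b * (∑ c ∈ range m, q ^ ((c : ℤ))) * (∑ c ∈ range M, q ^ (-(c : ℤ))))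
    = (t - 1) * (q * (∑ c ∈ range m, q ^ ((c : ℤ))) * t ^ b
        - (∑ c ∈ range m, q ^ (-(c : ℤ))) * t ^ a) := by
  have hA := geomA q hq M
  have hB := geomB q hq M
  rw [zpow_add_one₀ ht a, zpow_add_one₀ ht b]
  linear_combination ((t - 1) * t ^ b * (∑ c ∈ range m, q ^ ((c : ℤ)))) * hA
    + ((t - 1) * t ^ a * (∑ c ∈ range m, q ^ (-(c : ℤ)))) * hB

def colH (μ : ℕ → ℕ) (N c : ℕ) : ℕ := ((Finset.range N).filter fun r => c < μ r).card

lemma key (q t : K) (hq : q ≠ 0) (ht : t ≠ 0) :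
    ∀ (N : ℕ) (μ : ℕ → ℕ), Antitone μ → μ N = 0 →
    ∑ r ∈ range N, ∑ c ∈ range (μ r),
        (q ^ ((μ r : ℤ) - c) * t ^ ((r : ℤ) + 1 - colH μ N c)
          + q ^ ((c : ℤ) + 1 - μ r) * t ^ ((colH μ N c : ℤ) - r))
      = q * t * (∑ r ∈ range N, ∑ c ∈ range (μ r), q ^ ((c : ℤ)) * t ^ ((r : ℤ)))
        + (∑ r ∈ range N, ∑ c ∈ range (μ r), q ^ (-(c : ℤ)) * t ^ (-(r : ℤ)))
        - (q - 1) * (t - 1)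
            * (∑ r ∈ range N, ∑ c ∈ range (μ r), q ^ ((c : ℤ)) * t ^ ((r : ℤ)))
            * (∑ r ∈ range N, ∑ c ∈ range (μ r), q ^ (-(c : ℤ)) * t ^ (-(r : ℤ))) := by
  intro N
  induction N with
  | zero => intro μ _ _; simp
  | succ N ih =>
    intro μ hμ h0
    set ν : ℕ → ℕ := fun r => if r < N then μ r else 0 with hνdef
    have f1 : ∀ r, r < N → ν r = μ r := fun r hr => if_pos hr
    have hνanti : Antitone ν := by
      intro a b hab
      by_cases hb : b < N
      · rw [f1 a (lt_of_le_of_lt hab hb), f1 b hb]; exact hμ hab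
      · show (if b < N then μ b else 0) ≤ ν a
        rw [if_neg hb]; exact Nat.zero_le _
    have hν0 : ν N = 0 := if_neg (lt_irrefl N)
    have hIH := ih ν hνanti hν0
    have hmle : ∀ r, r < N → μ N ≤ μ r := fun r hr => hμ (le_of_lt hr)
    -- column height facts
    have hcolν : ∀ c, colH ν N c = colH μ N c := by
      intro c; unfold colH
      congr 1
      refine filter_congr fun r hr => ?_
      rw [f1 r (mem_range.mp hr)]
    have hcol1 : ∀ c, c < μ N → colH μ (N + 1) c = N + 1 := by
      intro c hc
      unfold colH
      rw [filter_true_of_mem, card_range]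
      intro r hr
      exact lt_of_lt_of_le hc (hμ (Nat.lt_succ_iff.mp (mem_range.mp hr)))
    have hcol2 : ∀ c, c < μ N → colH μ N c = N := by
      intro c hc
      unfold colH
      rw [filter_true_of_mem, card_range]
      intro r hr
      exact lt_of_lt_of_le hc (hmle r (mem_range.mp hr))
    have hcol3 : ∀ c, μ N ≤ c → colH μ (N + 1) c = colH μ N c := by
      intro c hc
      unfold colH
      rw [range_add_one, filter_insert, if_neg (by omega)]
    -- rewrite hIH to be about μ
    have eL : ∑ r ∈ range N, ∑ c ∈ range (ν r),
          (q ^ ((ν r : ℤ) - c) * t ^ ((r : ℤ) + 1 - colH ν N c)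
            + q ^ ((c : ℤ) + 1 - ν r) * t ^ ((colH ν N c : ℤ) - r))
        = ∑ r ∈ range N, ∑ c ∈ range (μ r),
          (q ^ ((μ r : ℤ) - c) * t ^ ((r : ℤ) + 1 - colH μ N c)
            + q ^ ((c : ℤ) + 1 - μ r) * t ^ ((colH μ N c : ℤ) - r)) := by
      refine sum_congr rfl fun r hr => ?_
      rw [f1 r (mem_range.mp hr)]
      exact sum_congr rfl fun c _ => by rw [hcolν c]
    have eB : ∑ r ∈ range N, ∑ c ∈ range (ν r), q ^ ((c : ℤ)) * t ^ ((r : ℤ))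
        = ∑ r ∈ range N, ∑ c ∈ range (μ r), q ^ ((c : ℤ)) * t ^ ((r : ℤ)) :=
      sum_congr rfl fun r hr => by rw [f1 r (mem_range.mp hr)]
    have eB' : ∑ r ∈ range N, ∑ c ∈ range (ν r), q ^ (-(c : ℤ)) * t ^ (-(r : ℤ))
        = ∑ r ∈ range N, ∑ c ∈ range (μ r), q ^ (-(c : ℤ)) * t ^ (-(r : ℤ)) :=
      sum_congr rfl fun r hr => by rw [f1 r (mem_range.mp hr)]
    rw [eL, eB, eB'] at hIH
    clear eL eB eB' hνanti hν0 hcolν f1 hνdef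
    -- abbreviations
    have hrows : ∀ r ∈ range N,
        (∑ c ∈ range (μ r),
          (q ^ ((μ r : ℤ) - c) * t ^ ((r : ℤ) + 1 - colH μ (N + 1) c)
            + q ^ ((c : ℤ) + 1 - μ r) * t ^ ((colH μ (N + 1) c : ℤ) - r)))
        = (∑ c ∈ range (μ r),
          (q ^ ((μ r : ℤ) - c) * t ^ ((r : ℤ) + 1 - colH μ N c)
            + q ^ ((c : ℤ) + 1 - μ r) * t ^ ((colH μ N c : ℤ) - r)))
          + ((t ^ ((r : ℤ) - N) - t ^ ((r : ℤ) - N + 1))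
                * (q ^ ((μ r : ℤ)) * ∑ c ∈ range (μ N), q ^ (-(c : ℤ)))
              + (t ^ ((N : ℤ) - r + 1) - t ^ ((N : ℤ) - r))
                * (q ^ (1 - (μ r : ℤ)) * ∑ c ∈ range (μ N), q ^ ((c : ℤ)))) := by
      intro r hr
      have hr' := mem_range.mp hr
      have hmr : μ N ≤ μ r := hmle r hr'
      have e4 : ∑ c ∈ range (μ N),
            (q ^ ((μ r : ℤ) - c) * t ^ ((r : ℤ) + 1 - colH μ (N + 1) c)
              + q ^ ((c : ℤ) + 1 - μ r) * t ^ ((colH μ (N + 1) c : ℤ) - r))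
          = ∑ c ∈ range (μ N),
            ((q ^ ((μ r : ℤ) - c) * t ^ ((r : ℤ) + 1 - colH μ N c)
              + q ^ ((c : ℤ) + 1 - μ r) * t ^ ((colH μ N c : ℤ) - r))
            + ((t ^ ((r : ℤ) - N) - t ^ ((r : ℤ) - N + 1))
                  * (q ^ ((μ r : ℤ)) * q ^ (-(c : ℤ)))
                + (t ^ ((N : ℤ) - r + 1) - t ^ ((N : ℤ) - r))
                  * (q ^ (1 - (μ r : ℤ)) * q ^ ((c : ℤ))))) := by
        refine sum_congr rfl fun c hc => ?_
        have hc' := mem_range.mp hc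
        rw [hcol1 c hc', hcol2 c hc']
        rw [show ((μ r : ℤ)) - c = (μ r : ℤ) + (-(c:ℤ)) from by ring, zpow_add₀ hq,
          show ((c:ℤ)) + 1 - μ r = (1 - (μ r : ℤ)) + (c:ℤ) from by ring, zpow_add₀ hq,
          show ((r:ℤ)) + 1 - ((N + 1 : ℕ) : ℤ) = (r:ℤ) - N from by push_cast; ring,
          show (((N + 1 : ℕ) : ℤ)) - r = ((N:ℤ) - r) + 1 from by push_cast; ring,
          zpow_add_one₀ ht (((N:ℤ)) - r),
          show ((r:ℤ)) + 1 - (N:ℤ) = ((r:ℤ) - N) + 1 from by ring,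
          zpow_add_one₀ ht (((r:ℤ)) - N)]
        ring
      have e3 : ∑ c ∈ Ico (μ N) (μ r),
            (q ^ ((μ r : ℤ) - c) * t ^ ((r : ℤ) + 1 - colH μ (N + 1) c)
              + q ^ ((c : ℤ) + 1 - μ r) * t ^ ((colH μ (N + 1) c : ℤ) - r))
          = ∑ c ∈ Ico (μ N) (μ r),
            (q ^ ((μ r : ℤ) - c) * t ^ ((r : ℤ) + 1 - colH μ N c)
              + q ^ ((c : ℤ) + 1 - μ r) * t ^ ((colH μ N c : ℤ) - r)) := by
        refine sum_congr rfl fun c hc => ?_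
        rw [hcol3 c (mem_Ico.mp hc).1]
      have e4' : ∑ c ∈ range (μ N),
            (q ^ ((μ r : ℤ) - c) * t ^ ((r : ℤ) + 1 - colH μ (N + 1) c)
              + q ^ ((c : ℤ) + 1 - μ r) * t ^ ((colH μ (N + 1) c : ℤ) - r))
          = (∑ c ∈ range (μ N),
              (q ^ ((μ r : ℤ) - c) * t ^ ((r : ℤ) + 1 - colH μ N c)
                + q ^ ((c : ℤ) + 1 - μ r) * t ^ ((colH μ N c : ℤ) - r)))
            + ((t ^ ((r : ℤ) - N) - t ^ ((r : ℤ) - N + 1))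
                  * (q ^ ((μ r : ℤ)) * ∑ c ∈ range (μ N), q ^ (-(c : ℤ)))
                + (t ^ ((N : ℤ) - r + 1) - t ^ ((N : ℤ) - r))
                  * (q ^ (1 - (μ r : ℤ)) * ∑ c ∈ range (μ N), q ^ ((c : ℤ)))) := by
        rw [e4, sum_add_distrib]
        congr 1
        rw [sum_add_distrib]
        simp only [← mul_sum]
      rw [range_eq_Ico,
        ← sum_Ico_consecutive _ (Nat.zero_le (μ N)) hmr,
        ← sum_Ico_consecutive _ (Nat.zero_le (μ N)) hmr, e3, ← range_eq_Ico, e4']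
      abel
    -- expand the (N+1) sums
    simp only [sum_range_succ]
    have eRowL : ∑ c ∈ range (μ N),
        (q ^ ((μ N : ℤ) - c) * t ^ ((N : ℤ) + 1 - colH μ (N + 1) c)
          + q ^ ((c : ℤ) + 1 - μ N) * t ^ ((colH μ (N + 1) c : ℤ) - N))
        = q ^ ((μ N : ℤ)) * (∑ c ∈ range (μ N), q ^ (-(c : ℤ)))
          + t * (q ^ (1 - (μ N : ℤ)) * ∑ c ∈ range (μ N), q ^ ((c : ℤ))) := by
      have u : ∀ c ∈ range (μ N),
          (q ^ ((μ N : ℤ) - c) * t ^ ((N : ℤ) + 1 - colH μ (N + 1) c)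
            + q ^ ((c : ℤ) + 1 - μ N) * t ^ ((colH μ (N + 1) c : ℤ) - N))
          = q ^ ((μ N : ℤ)) * q ^ (-(c : ℤ)) + t * (q ^ (1 - (μ N : ℤ)) * q ^ ((c : ℤ))) := by
        intro c hc
        have hc' := mem_range.mp hc
        rw [hcol1 c hc']
        rw [show ((N:ℤ)) + 1 - ((N + 1 : ℕ) : ℤ) = 0 from by push_cast; ring,
          show (((N + 1 : ℕ) : ℤ)) - N = 1 from by push_cast; ring,
          show ((μ N : ℤ)) - c = (μ N : ℤ) + (-(c:ℤ)) from by ring, zpow_add₀ hq,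
          show ((c:ℤ)) + 1 - μ N = (1 - (μ N : ℤ)) + (c:ℤ) from by ring, zpow_add₀ hq,
          zpow_zero, zpow_one]
        ring
      rw [sum_congr rfl u, sum_add_distrib]
      simp only [← mul_sum]
    have eRowB : ∑ c ∈ range (μ N), q ^ ((c : ℤ)) * t ^ ((N : ℤ))
        = (∑ c ∈ range (μ N), q ^ ((c : ℤ))) * t ^ ((N : ℤ)) := by rw [sum_mul]
    have eRowB' : ∑ c ∈ range (μ N), q ^ (-(c : ℤ)) * t ^ (-(N : ℤ))
        = (∑ c ∈ range (μ N), q ^ (-(c : ℤ))) * t ^ (-(N : ℤ)) := by rw [sum_mul]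
    rw [eRowL, eRowB, eRowB', sum_congr rfl hrows, sum_add_distrib, hIH]
    -- the per-row cross-term identity, summed
    have hsum : ∑ r ∈ range N,
        (((t ^ ((r : ℤ) - N) - t ^ ((r : ℤ) - N + 1))
              * (q ^ ((μ r : ℤ)) * ∑ c ∈ range (μ N), q ^ (-(c : ℤ)))
            + (t ^ ((N : ℤ) - r + 1) - t ^ ((N : ℤ) - r))
              * (q ^ (1 - (μ r : ℤ)) * ∑ c ∈ range (μ N), q ^ ((c : ℤ))))
          + (q - 1) * (t - 1)
            * ((∑ c ∈ range (μ r), q ^ ((c : ℤ)) * t ^ ((r : ℤ)))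
                  * (t ^ (-(N : ℤ)) * ∑ c ∈ range (μ N), q ^ (-(c : ℤ)))
                + (t ^ ((N : ℤ)) * ∑ c ∈ range (μ N), q ^ ((c : ℤ)))
                  * (∑ c ∈ range (μ r), q ^ (-(c : ℤ)) * t ^ (-(r : ℤ)))))
        = ∑ r ∈ range N,
            ((t - 1) * (q * (∑ c ∈ range (μ N), q ^ ((c : ℤ))) * t ^ ((N : ℤ) - r))
              - (t - 1) * ((∑ c ∈ range (μ N), q ^ (-(c : ℤ))) * t ^ ((r : ℤ) - N))) := by
      refine sum_congr rfl fun r hr => ?_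
      have hri := rowid q t hq ht ((r : ℤ) - N) ((N : ℤ) - r) (μ r) (μ N)
      have p1 : (∑ c ∈ range (μ r), q ^ ((c : ℤ)) * t ^ ((r : ℤ)))
          = (∑ c ∈ range (μ r), q ^ ((c : ℤ))) * t ^ ((r : ℤ)) := by rw [sum_mul]
      have p1' : (∑ c ∈ range (μ r), q ^ (-(c : ℤ)) * t ^ (-(r : ℤ)))
          = (∑ c ∈ range (μ r), q ^ (-(c : ℤ))) * t ^ (-(r : ℤ)) := by rw [sum_mul]
      have p2 : t ^ ((r : ℤ)) * t ^ (-(N : ℤ)) = t ^ ((r : ℤ) - N) := by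
        rw [← zpow_add₀ ht, show (r : ℤ) + -(N : ℤ) = (r : ℤ) - (N : ℤ) from by ring]
      have p3 : t ^ ((N : ℤ)) * t ^ (-(r : ℤ)) = t ^ ((N : ℤ) - r) := by
        rw [← zpow_add₀ ht, show (N : ℤ) + -(r : ℤ) = (N : ℤ) - (r : ℤ) from by ring]
      rw [p1, p1']
      linear_combination hri
        + ((q - 1) * (t - 1) * (∑ c ∈ range (μ r), q ^ ((c : ℤ)))
            * (∑ c ∈ range (μ N), q ^ (-(c : ℤ)))) * p2
        + ((q - 1) * (t - 1) * (∑ c ∈ range (μ N), q ^ ((c : ℤ)))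
            * (∑ c ∈ range (μ r), q ^ (-(c : ℤ)))) * p3
    have hstuff : ∑ r ∈ range N,
        ((q - 1) * (t - 1)
          * ((∑ c ∈ range (μ r), q ^ ((c : ℤ)) * t ^ ((r : ℤ)))
                * (t ^ (-(N : ℤ)) * ∑ c ∈ range (μ N), q ^ (-(c : ℤ)))
              + (t ^ ((N : ℤ)) * ∑ c ∈ range (μ N), q ^ ((c : ℤ)))
                * (∑ c ∈ range (μ r), q ^ (-(c : ℤ)) * t ^ (-(r : ℤ)))))
        = (q - 1) * (t - 1)
            * ((∑ r ∈ range N, ∑ c ∈ range (μ r), q ^ ((c : ℤ)) * t ^ ((r : ℤ)))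
                  * (t ^ (-(N : ℤ)) * ∑ c ∈ range (μ N), q ^ (-(c : ℤ)))
                + (t ^ ((N : ℤ)) * ∑ c ∈ range (μ N), q ^ ((c : ℤ)))
                  * (∑ r ∈ range N, ∑ c ∈ range (μ r), q ^ (-(c : ℤ)) * t ^ (-(r : ℤ)))) := by
      rw [← mul_sum, sum_add_distrib, ← sum_mul, ← mul_sum]
    have hDsum : ∑ r ∈ range N,
        ((t - 1) * (q * (∑ c ∈ range (μ N), q ^ ((c : ℤ))) * t ^ ((N : ℤ) - r))
          - (t - 1) * ((∑ c ∈ range (μ N), q ^ (-(c : ℤ))) * t ^ ((r : ℤ) - N)))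
        = q * (∑ c ∈ range (μ N), q ^ ((c : ℤ))) * (t ^ ((N : ℤ)) * t - t)
          - (∑ c ∈ range (μ N), q ^ (-(c : ℤ))) * (1 - t ^ (-(N : ℤ))) := by
      rw [sum_sub_distrib]
      have u1 : ∑ r ∈ range N, (t - 1) * (q * (∑ c ∈ range (μ N), q ^ ((c : ℤ))) * t ^ ((N : ℤ) - r))
          = (q * (∑ c ∈ range (μ N), q ^ ((c : ℤ)))) * ((t - 1) * ∑ r ∈ range N, t ^ ((N : ℤ) - r)) := by
        calc ∑ r ∈ range N, (t - 1) * (q * (∑ c ∈ range (μ N), q ^ ((c : ℤ))) * t ^ ((N : ℤ) - r))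
            = ∑ r ∈ range N, (q * (∑ c ∈ range (μ N), q ^ ((c : ℤ)))) * ((t - 1) * t ^ ((N : ℤ) - r)) :=
              sum_congr rfl fun r _ => by ring
          _ = (q * (∑ c ∈ range (μ N), q ^ ((c : ℤ)))) * ∑ r ∈ range N, (t - 1) * t ^ ((N : ℤ) - r) :=
              (mul_sum _ _ _).symm
          _ = (q * (∑ c ∈ range (μ N), q ^ ((c : ℤ)))) * ((t - 1) * ∑ r ∈ range N, t ^ ((N : ℤ) - r)) := by
              rw [mul_sum (range N) (fun r => t ^ ((N : ℤ) - r)) (t - 1)]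
      have u2 : ∑ r ∈ range N, (t - 1) * ((∑ c ∈ range (μ N), q ^ (-(c : ℤ))) * t ^ ((r : ℤ) - N))
          = (∑ c ∈ range (μ N), q ^ (-(c : ℤ))) * ((t - 1) * ∑ r ∈ range N, t ^ ((r : ℤ) - N)) := by
        calc ∑ r ∈ range N, (t - 1) * ((∑ c ∈ range (μ N), q ^ (-(c : ℤ))) * t ^ ((r : ℤ) - N))
            = ∑ r ∈ range N, (∑ c ∈ range (μ N), q ^ (-(c : ℤ))) * ((t - 1) * t ^ ((r : ℤ) - N)) :=
              sum_congr rfl fun r _ => by ring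
          _ = (∑ c ∈ range (μ N), q ^ (-(c : ℤ))) * ∑ r ∈ range N, (t - 1) * t ^ ((r : ℤ) - N) :=
              (mul_sum _ _ _).symm
          _ = (∑ c ∈ range (μ N), q ^ (-(c : ℤ))) * ((t - 1) * ∑ r ∈ range N, t ^ ((r : ℤ) - N)) := by
              rw [mul_sum (range N) (fun r => t ^ ((r : ℤ) - N)) (t - 1)]
      rw [u1, u2, geomD t ht N, geomE t ht N, zpow_add_one₀ ht]
    rw [sum_add_distrib, hstuff, hDsum] at hsum
    have R2 : t ^ ((N : ℤ)) * t ^ (-(N : ℤ)) = 1 := by rw [← zpow_add₀ ht]; simp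
    have R3 : q ^ ((μ N : ℤ)) * q ^ (1 - (μ N : ℤ)) = q := by
      rw [← zpow_add₀ hq]
      norm_num
    have R4 := geomC q hq (μ N)
    have R5 := geomA q hq (μ N)
    linear_combination hsum
      + ((q - 1) * (t - 1) * (∑ c ∈ range (μ N), q ^ ((c : ℤ)))
          * (∑ c ∈ range (μ N), q ^ (-(c : ℤ)))) * R2
      + (q ^ ((μ N : ℤ)) - 1) * R4
      + (∑ c ∈ range (μ N), q ^ ((c : ℤ))) * R3
      + ((t - 1) * (∑ c ∈ range (μ N), q ^ ((c : ℤ)))) * R5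



/-- The arms-and-legs formula for the character of the cotangent space of
`Hilb^n(ℂ²)` at a monomial ideal `I_μ`:
`Σ_{□∈μ} (q^{a(□)+1} t^{-l(□)} + q^{-a(□)} t^{l(□)+1})
  = qt·B_μ + B_μ* − (q−1)(t−1)·B_μ·B_μ*`,
where `B_μ = Σ_{□∈μ} q^{c(□)} t^{r(□)}` and `*` is `q ↦ q⁻¹, t ↦ t⁻¹`.
The partition is an antitone finitely supported `μ : ℕ → ℕ`, cells are pairs
`(r,c)` with `c < μ r`, `arm (r,c) = μ r - c - 1`, and
`leg (r,c) = #{r' > r | c < μ r'}`. -/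
theorem stmt18 (q t : FractionRing (MvPolynomial (Fin 2) ℚ))
    (hq : q = algebraMap (MvPolynomial (Fin 2) ℚ) _ (MvPolynomial.X 0))
    (ht : t = algebraMap (MvPolynomial (Fin 2) ℚ) _ (MvPolynomial.X 1))
    (μ : ℕ → ℕ) (hanti : Antitone μ) (hfin : (Function.support μ).Finite)
    (cells : Finset (ℕ × ℕ))
    (hcells : ∀ p : ℕ × ℕ, p ∈ cells ↔ p.2 < μ p.1) :
    ∑ p ∈ cells,
        (q ^ (μ p.1 - p.2 - 1 + 1) *
            (t⁻¹) ^ (Set.ncard {r : ℕ | p.1 < r ∧ p.2 < μ r}) +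
          (q⁻¹) ^ (μ p.1 - p.2 - 1) *
            t ^ (Set.ncard {r : ℕ | p.1 < r ∧ p.2 < μ r} + 1))
      = q * t * (∑ p ∈ cells, q ^ p.2 * t ^ p.1)
        + (∑ p ∈ cells, (q⁻¹) ^ p.2 * (t⁻¹) ^ p.1)
        - (q - 1) * (t - 1) * (∑ p ∈ cells, q ^ p.2 * t ^ p.1) *
            (∑ p ∈ cells, (q⁻¹) ^ p.2 * (t⁻¹) ^ p.1) := by
  have hq0 : q ≠ 0 := by
    rw [hq]; intro h
    exact MvPolynomial.X_ne_zero (0 : Fin 2)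
      ((IsFractionRing.to_map_eq_zero_iff (K := FractionRing (MvPolynomial (Fin 2) ℚ))).mp h)
  have ht0 : t ≠ 0 := by
    rw [ht]; intro h
    exact MvPolynomial.X_ne_zero (1 : Fin 2)
      ((IsFractionRing.to_map_eq_zero_iff (K := FractionRing (MvPolynomial (Fin 2) ℚ))).mp h)
  obtain ⟨N, hN⟩ : ∃ N, μ N = 0 := by
    by_contra h
    push_neg at h
    have : Function.support μ = Set.univ := Set.eq_univ_of_forall h
    rw [this] at hfin
    exact Set.infinite_univ hfin
  have hrowlt : ∀ r c : ℕ, c < μ r → r < N := by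
    intro r c hc
    by_contra hge
    push_neg at hge
    have := hanti hge
    omega
  have hcells' : cells = (range N).biUnion (fun r => (range (μ r)).image (fun c => (r, c))) := by
    ext p
    obtain ⟨a, b⟩ := p
    simp only [hcells, mem_biUnion, mem_image, mem_range]
    constructor
    · intro hb
      exact ⟨a, hrowlt a b hb, b, hb, rfl⟩
    · rintro ⟨r, hr, c, hc, hp⟩
      simp only [Prod.mk.injEq] at hp
      obtain ⟨rfl, rfl⟩ := hp
      exact hc
  have hdisj : Set.PairwiseDisjoint ↑(range N)
      (fun r => (range (μ r)).image (fun c => (r, c))) := by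
    intro x _ y _ hxy
    simp only [Function.onFun]
    rw [Finset.disjoint_left]
    intro p hp hp'
    simp only [mem_image, mem_range] at hp hp'
    obtain ⟨c, _, rfl⟩ := hp
    obtain ⟨c', _, h⟩ := hp'
    exact hxy ((congrArg Prod.fst h).symm)
  have hsumconv : ∀ f : ℕ × ℕ → FractionRing (MvPolynomial (Fin 2) ℚ),
      ∑ p ∈ cells, f p = ∑ r ∈ range N, ∑ c ∈ range (μ r), f (r, c) := by
    intro f
    rw [hcells', sum_biUnion hdisj]
    refine sum_congr rfl fun r _ => ?_
    rw [sum_image]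
    intro x _ y _ hxy
    simpa using hxy
  have hleg : ∀ r c : ℕ, c < μ r →
      r + 1 ≤ colH μ N c ∧ {r' : ℕ | r < r' ∧ c < μ r'}.ncard = colH μ N c - (r + 1) := by
    intro r c hc
    have hsub : range (r + 1) ⊆ (range N).filter (fun r' => c < μ r') := by
      intro x hx
      simp only [mem_range] at hx
      have h1 : μ r ≤ μ x := hanti (by omega)
      simp only [mem_filter, mem_range]
      have hxN : x < N := hrowlt x c (by omega)
      exact ⟨hxN, by omega⟩
    have hle : r + 1 ≤ colH μ N c := by
      have := card_le_card hsub
      rwa [card_range] at this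
    refine ⟨hle, ?_⟩
    have hset : {r' : ℕ | r < r' ∧ c < μ r'}
        = ↑(((range N).filter (fun r' => c < μ r')) \ range (r + 1)) := by
      ext r'
      simp only [Set.mem_setOf_eq, coe_sdiff, Set.mem_diff, mem_coe, mem_filter, mem_range]
      constructor
      · rintro ⟨h1, h2⟩
        exact ⟨⟨hrowlt r' c h2, h2⟩, by omega⟩
      · rintro ⟨⟨_, h2⟩, h3⟩
        exact ⟨by omega, h2⟩
    rw [hset, Set.ncard_coe_finset, card_sdiff_of_subset hsub, card_range]
    rfl
  have eB : ∑ p ∈ cells, q ^ p.2 * t ^ p.1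
      = ∑ r ∈ range N, ∑ c ∈ range (μ r), q ^ ((c : ℤ)) * t ^ ((r : ℤ)) := by
    rw [hsumconv (fun p => q ^ p.2 * t ^ p.1)]
    refine sum_congr rfl fun r _ => sum_congr rfl fun c _ => ?_
    show q ^ c * t ^ r = _
    rw [zpow_natCast, zpow_natCast]
  have eB' : ∑ p ∈ cells, (q⁻¹) ^ p.2 * (t⁻¹) ^ p.1
      = ∑ r ∈ range N, ∑ c ∈ range (μ r), q ^ (-(c : ℤ)) * t ^ (-(r : ℤ)) := by
    rw [hsumconv (fun p => (q⁻¹) ^ p.2 * (t⁻¹) ^ p.1)]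
    refine sum_congr rfl fun r _ => sum_congr rfl fun c _ => ?_
    show (q⁻¹) ^ c * (t⁻¹) ^ r = _
    rw [zpow_neg, zpow_neg, zpow_natCast, zpow_natCast, inv_pow, inv_pow]
  have eL : ∑ p ∈ cells,
        (q ^ (μ p.1 - p.2 - 1 + 1) *
            (t⁻¹) ^ (Set.ncard {r : ℕ | p.1 < r ∧ p.2 < μ r}) +
          (q⁻¹) ^ (μ p.1 - p.2 - 1) *
            t ^ (Set.ncard {r : ℕ | p.1 < r ∧ p.2 < μ r} + 1))
      = ∑ r ∈ range N, ∑ c ∈ range (μ r),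
          (q ^ ((μ r : ℤ) - c) * t ^ ((r : ℤ) + 1 - colH μ N c)
            + q ^ ((c : ℤ) + 1 - μ r) * t ^ ((colH μ N c : ℤ) - r)) := by
    rw [hsumconv (fun p => q ^ (μ p.1 - p.2 - 1 + 1) *
            (t⁻¹) ^ (Set.ncard {r : ℕ | p.1 < r ∧ p.2 < μ r}) +
          (q⁻¹) ^ (μ p.1 - p.2 - 1) *
            t ^ (Set.ncard {r : ℕ | p.1 < r ∧ p.2 < μ r} + 1))]
    refine sum_congr rfl fun r hr => sum_congr rfl fun c hc => ?_
    have hc' := mem_range.mp hc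
    obtain ⟨hle, hnc⟩ := hleg r c hc'
    show q ^ (μ r - c - 1 + 1) * (t⁻¹) ^ (Set.ncard {r' : ℕ | r < r' ∧ c < μ r'}) +
          (q⁻¹) ^ (μ r - c - 1) * t ^ (Set.ncard {r' : ℕ | r < r' ∧ c < μ r'} + 1) = _
    have A1 : q ^ (μ r - c - 1 + 1) = q ^ ((μ r : ℤ) - c) := by
      rw [← zpow_natCast q (μ r - c - 1 + 1)]; congr 1; omega
    have A2 : (t⁻¹) ^ (colH μ N c - (r + 1)) = t ^ ((r : ℤ) + 1 - colH μ N c) := by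
      rw [inv_pow, ← zpow_natCast t (colH μ N c - (r + 1)), ← zpow_neg]; congr 1; omega
    have A3 : (q⁻¹) ^ (μ r - c - 1) = q ^ ((c : ℤ) + 1 - μ r) := by
      rw [inv_pow, ← zpow_natCast q (μ r - c - 1), ← zpow_neg]; congr 1; omega
    have A4 : t ^ (colH μ N c - (r + 1) + 1) = t ^ ((colH μ N c : ℤ) - r) := by
      rw [← zpow_natCast t (colH μ N c - (r + 1) + 1)]; congr 1; omega
    rw [hnc, A1, A2, A3, A4]
  rw [eL, eB, eB']
  exact key q t hq0 ht0 N μ hanti hN
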